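/- Let N ≥ 2 be a natural number. Assume 0 < π0 < 1 and π1, π2, π3 > 0. Define φ(L) = (1/2)·[(Σ_{i=1}^N ΔL_i)² + (2π3/π1)·Σ_{i≠j}(ΔL_i − ΔL_j)²], where ΔL_i = L_i − L_ss^N and Σ_{i≠j} denotes the sum over all ordered pairs (i,j) with i ≠ j. Then φ is a Lyapunov function on Ω_N for the vector field F: (i) φ(L) ≥ 0 for all L ∈ Ω_N, with φ(L) = 0 if and only if L_i = L_ss^N for all i; and (ii) the derivative of φ along the vector field satisfies ∇φ(L)·F(L) ≤ 0 for all L ∈ Ω_N, with equality only at the unique steady state L_i = L_ss^N for all i. -/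

import Mathlib

noncomputable section

open scoped BigOperators

/-- The flux `J(L)` for the `N`-flagella model. -/
def JN (π2 π3 : ℝ) {N : ℕ} (L : Fin N → ℝ) : ℝ :=
  1 / (1 + π2 * ∑ j, L j + π3 * ∑ j, (L j) ^ 2)

/-- The `i`-th component of the `N`-flagella vector field. -/
def FN (π0 π1 π2 π3 : ℝ) {N : ℕ} (i : Fin N) (L : Fin N → ℝ) : ℝ :=
  JN π2 π3 L * (1 - ∑ j, L j) - π0 - π1 * JN π2 π3 L * L i

/-- The domain `Ω_N`. -/
def OmegaN (N : ℕ) : Set (Fin N → ℝ) :=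
  {L | (∀ i, 0 ≤ L i) ∧ ∑ i, L i ≤ 1}

/-- The `N`-flagella steady-state length `L_ss^N`. -/
def LssN (π0 π1 π2 π3 : ℝ) (N : ℕ) : ℝ :=
  ((1 + π0 * π2 + π1 / N) / (2 * π0 * π3)) *
    (Real.sqrt (1 + 4 * (1 - π0) * π0 * π3 / (N * (1 + π0 * π2 + π1 / N) ^ 2)) - 1)

/-- The Lyapunov function `φ(L)` for the `N`-flagella model. -/
def phiN (π0 π1 π2 π3 : ℝ) {N : ℕ} (L : Fin N → ℝ) : ℝ :=
  (1 / 2) * ((∑ i, (L i - LssN π0 π1 π2 π3 N)) ^ 2 +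
    (2 * π3 / π1) * ∑ i, ∑ j ∈ Finset.univ.filter (· ≠ i),
      ((L i - LssN π0 π1 π2 π3 N) - (L j - LssN π0 π1 π2 π3 N)) ^ 2)

/-- The derivative of `φ` along the vector field `F`, i.e. `∇φ·F`. -/
def phiNDot (π0 π1 π2 π3 : ℝ) {N : ℕ} (L : Fin N → ℝ) : ℝ :=
  ∑ i, deriv (fun x => phiN π0 π1 π2 π3 (Function.update L i x)) (L i) *
    FN π0 π1 π2 π3 i L

/-! ### Auxiliary lemmas -/

/-- The steady state is nonnegative and satisfies its quadratic equation. -/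
lemma LssN_key (π0 π1 π2 π3 : ℝ) (N : ℕ) (hN : 2 ≤ N)
    (hπ0 : 0 < π0) (hπ0' : π0 < 1) (hπ1 : 0 < π1) (hπ2 : 0 < π2) (hπ3 : 0 < π3) :
    0 ≤ LssN π0 π1 π2 π3 N ∧
    (N:ℝ) * π0 * π3 * (LssN π0 π1 π2 π3 N)^2 +
      ((N:ℝ) + (N:ℝ) * π0 * π2 + π1) * LssN π0 π1 π2 π3 N = 1 - π0 := by
  have hNpos : (0:ℝ) < N := by positivity
  have hN0 : (N:ℝ) ≠ 0 := ne_of_gt hNpos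
  set a : ℝ := 1 + π0 * π2 + π1 / N with ha
  have hapos : 0 < a := by positivity
  have hq : (0:ℝ) ≤ 4 * (1 - π0) * π0 * π3 / (N * a ^ 2) :=
    div_nonneg (mul_nonneg (mul_nonneg (by linarith : (0:ℝ) ≤ 4*(1-π0)) hπ0.le) hπ3.le)
      (by positivity)
  have harg : (0:ℝ) ≤ 1 + 4 * (1 - π0) * π0 * π3 / (N * a ^ 2) := by linarith
  set w : ℝ := Real.sqrt (1 + 4 * (1 - π0) * π0 * π3 / (N * a ^ 2)) with hw
  have hw2 : w ^ 2 = 1 + 4 * (1 - π0) * π0 * π3 / (N * a ^ 2) := Real.sq_sqrt harg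
  have hw1 : 1 ≤ w := by
    have h := Real.sqrt_le_sqrt (show (1:ℝ) ≤ 1 + 4 * (1 - π0) * π0 * π3 / (N * a ^ 2) by linarith)
    simpa [hw] using h
  have hL : LssN π0 π1 π2 π3 N = (a / (2*π0*π3)) * (w - 1) := rfl
  have ha2 : (N:ℝ) * a^2 * (w^2 - 1) = 4*(1-π0)*π0*π3 := by
    rw [hw2]; field_simp; ring
  constructor
  · rw [hL]
    have : 0 ≤ w - 1 := by linarith
    positivity
  · rw [hL]
    have h2 : (N:ℝ) * π0*π3*((a / (2*π0*π3)) * (w - 1))^2 + ((N:ℝ) + (N:ℝ)*π0*π2 + π1) * ((a / (2*π0*π3)) * (w - 1))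
        = ((N:ℝ) * a^2 * (w^2-1)) / (4*π0*π3) := by
      rw [ha]
      field_simp
      ring
    rw [h2, ha2]
    field_simp

/-- The partial derivative of `φ` in the `i`-th direction. -/
lemma phiN_deriv (π0 π1 π2 π3 : ℝ) {N : ℕ} (L : Fin N → ℝ) (i : Fin N) :
    deriv (fun x => phiN π0 π1 π2 π3 (Function.update L i x)) (L i)
      = (∑ j, (L j - LssN π0 π1 π2 π3 N)) +
        2 * (2 * π3 / π1) * ∑ k ∈ Finset.univ.filter (· ≠ i), (L i - L k) := by
  set s : ℝ := LssN π0 π1 π2 π3 N with hs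
  set K : ℝ := 2 * π3 / π1 with hK
  have hu : ∀ j : Fin N, ∀ x : ℝ, HasDerivAt (fun y => Function.update L i y j - s)
      ((if j = i then (1:ℝ) else 0)) x := by
    intro j x
    simp only [Function.update_apply]
    by_cases h : j = i
    · simpa [h] using (hasDerivAt_id x).sub_const s
    · simpa [h] using (hasDerivAt_const x (L j - s))
  have hg : ∀ x : ℝ, HasDerivAt (fun y => ∑ j, (Function.update L i y j - s))
      (∑ j : Fin N, if j = i then (1:ℝ) else 0) x := by
    intro x
    exact HasDerivAt.fun_sum (fun j _ => hu j x)
  have hh : ∀ x : ℝ, HasDerivAt (fun y => ∑ j, ∑ k ∈ Finset.univ.filter (· ≠ j),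
      ((Function.update L i y j - s) - (Function.update L i y k - s)) ^ 2)
      (∑ j : Fin N, ∑ k ∈ Finset.univ.filter (· ≠ j),
        2 * ((Function.update L i x j - s) - (Function.update L i x k - s)) *
          ((if j = i then (1:ℝ) else 0) - (if k = i then (1:ℝ) else 0))) x := by
    intro x
    refine HasDerivAt.fun_sum (fun j _ => HasDerivAt.fun_sum (fun k _ => ?_))
    have := ((hu j x).fun_sub (hu k x)).fun_pow 2
    convert this using 1
    · rfl
    · ring
  have hf : HasDerivAt (fun y => phiN π0 π1 π2 π3 (Function.update L i y))
      ((1/2) * (2 * (∑ j, (Function.update L i (L i) j - s)) ^ 1 *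
          (∑ j : Fin N, if j = i then (1:ℝ) else 0) +
        K * ∑ j : Fin N, ∑ k ∈ Finset.univ.filter (· ≠ j),
          2 * ((Function.update L i (L i) j - s) - (Function.update L i (L i) k - s)) *
            ((if j = i then (1:ℝ) else 0) - (if k = i then (1:ℝ) else 0)))) (L i) := by
    exact (((hg (L i)).pow 2).add ((hh (L i)).const_mul K)).const_mul (1/2)
  rw [hf.deriv]
  rw [Function.update_eq_self]
  have e1 : (∑ j : Fin N, if j = i then (1:ℝ) else 0) = 1 := by simp
  rw [e1]
  have e2 : (∑ j : Fin N, ∑ k ∈ Finset.univ.filter (· ≠ j),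
      2 * ((L j - s) - (L k - s)) *
        ((if j = i then (1:ℝ) else 0) - (if k = i then (1:ℝ) else 0)))
      = 4 * ∑ k ∈ Finset.univ.filter (· ≠ i), (L i - L k) := by
    have split : ∀ j k : Fin N, 2 * ((L j - s) - (L k - s)) *
        ((if j = i then (1:ℝ) else 0) - (if k = i then (1:ℝ) else 0))
        = (if j = i then 2 * (L j - L k) else 0) - (if k = i then 2 * (L j - L k) else 0) := by
      intro j k
      by_cases h1 : j = i <;> by_cases h2 : k = i <;> simp [h1, h2]
    simp only [split, Finset.sum_sub_distrib]
    have s1 : (∑ j : Fin N, ∑ k ∈ Finset.univ.filter (· ≠ j), if j = i then 2*(L j - L k) else 0)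
        = ∑ k ∈ Finset.univ.filter (· ≠ i), 2*(L i - L k) := by
      have h1 : ∀ j : Fin N, (∑ k ∈ Finset.univ.filter (· ≠ j), if j = i then 2*(L j - L k) else 0)
          = if j = i then ∑ k ∈ Finset.univ.filter (· ≠ j), 2*(L j - L k) else 0 := by
        intro j; split_ifs <;> simp
      rw [Finset.sum_congr rfl (fun j _ => h1 j)]
      simp only [Finset.sum_ite_eq', Finset.mem_univ, if_true]
    have s2 : (∑ j : Fin N, ∑ k ∈ Finset.univ.filter (· ≠ j), if k = i then 2*(L j - L k) else 0)
        = ∑ j ∈ Finset.univ.filter (· ≠ i), 2*(L j - L i) := by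
      have inner : ∀ j : Fin N, (∑ k ∈ Finset.univ.filter (· ≠ j), if k = i then 2*(L j - L k) else 0)
          = if j ≠ i then 2*(L j - L i) else 0 := by
        intro j
        rw [Finset.sum_ite_eq' (Finset.univ.filter (· ≠ j)) i (fun k => 2*(L j - L k))]
        by_cases h : j = i <;> simp [h, Ne.symm, ne_comm]
      rw [Finset.sum_congr rfl (fun j _ => inner j), ← Finset.sum_filter]
    rw [s1, s2, ← Finset.sum_sub_distrib, ← Finset.sum_sub_distrib, Finset.mul_sum]
    exact Finset.sum_congr rfl (fun k _ => by ring)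
  rw [e2]
  ring

/-- Pairwise-square identity. -/
lemma pair_sq {N : ℕ} (L : Fin N → ℝ) :
    ∑ j : Fin N, ∑ k : Fin N, (L j - L k)^2
      = 2 * ((N:ℝ) * ∑ j, (L j)^2 - (∑ j, L j)^2) := by
  have inner : ∀ j : Fin N, ∑ k : Fin N, (L j - L k)^2
      = (N:ℝ) * (L j)^2 - 2 * L j * (∑ k, L k) + ∑ k, (L k)^2 := by
    intro j
    have : ∀ k : Fin N, (L j - L k)^2 = (L j)^2 - (2 * L j) * L k + (L k)^2 := by
      intro k; ring
    rw [Finset.sum_congr rfl (fun k _ => this k)]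
    rw [Finset.sum_add_distrib, Finset.sum_sub_distrib, Finset.sum_const, ← Finset.mul_sum]
    simp [Finset.card_univ, mul_comm]
  rw [Finset.sum_congr rfl (fun j _ => inner j)]
  rw [Finset.sum_add_distrib, Finset.sum_sub_distrib, Finset.sum_const, ← Finset.mul_sum,
    ← Finset.sum_mul, ← Finset.mul_sum]
  simp only [Finset.card_univ, Fintype.card_fin, nsmul_eq_mul]
  ring

set_option maxHeartbeats 1000000 in
/-- `φ` is a Lyapunov function on `Ω_N` for the `N`-flagella
vector field `F`. -/
theorem phiN_is_lyapunov (π0 π1 π2 π3 : ℝ) (N : ℕ) (hN : 2 ≤ N)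
    (hπ0 : 0 < π0) (hπ0' : π0 < 1) (hπ1 : 0 < π1) (hπ2 : 0 < π2) (hπ3 : 0 < π3) :
    (∀ L ∈ OmegaN N, 0 ≤ phiN π0 π1 π2 π3 L ∧
      (phiN π0 π1 π2 π3 L = 0 ↔ ∀ i, L i = LssN π0 π1 π2 π3 N)) ∧
    (∀ L ∈ OmegaN N, phiNDot π0 π1 π2 π3 L ≤ 0 ∧
      (phiNDot π0 π1 π2 π3 L = 0 → ∀ i, L i = LssN π0 π1 π2 π3 N)) := by
  have hNpos : (0:ℝ) < N := by positivity
  have hN0 : (N:ℝ) ≠ 0 := ne_of_gt hNpos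
  obtain ⟨hs0, hsq⟩ := LssN_key π0 π1 π2 π3 N hN hπ0 hπ0' hπ1 hπ2 hπ3
  set s : ℝ := LssN π0 π1 π2 π3 N with hsdef
  have hKpos : 0 < 2 * π3 / π1 := by positivity
  -- N·s ≤ 1 - π0
  have hNs : (N:ℝ) * s ≤ 1 - π0 := by
    nlinarith [mul_nonneg (mul_nonneg (mul_nonneg hNpos.le hπ0.le) hπ3.le) (sq_nonneg s),
      mul_nonneg (mul_nonneg hNpos.le (mul_nonneg hπ0.le hπ2.le)) hs0,
      mul_nonneg hπ1.le hs0]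
  constructor
  · -- Part (i)
    intro L _
    have hY : (0:ℝ) ≤ ∑ i, ∑ j ∈ Finset.univ.filter (· ≠ i),
        ((L i - s) - (L j - s)) ^ 2 :=
      Finset.sum_nonneg fun i _ => Finset.sum_nonneg fun j _ => sq_nonneg _
    have hX : (0:ℝ) ≤ (∑ i, (L i - s)) ^ 2 := sq_nonneg _
    constructor
    · have : phiN π0 π1 π2 π3 L = (1/2) * ((∑ i, (L i - s)) ^ 2 +
          (2*π3/π1) * ∑ i, ∑ j ∈ Finset.univ.filter (· ≠ i),
            ((L i - s) - (L j - s)) ^ 2) := rfl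
      rw [this]
      have := mul_nonneg hKpos.le hY
      linarith
    · constructor
      · intro h0
        have hphi : (∑ i, (L i - s)) ^ 2 +
            (2*π3/π1) * ∑ i, ∑ j ∈ Finset.univ.filter (· ≠ i),
              ((L i - s) - (L j - s)) ^ 2 = 0 := by
          have : phiN π0 π1 π2 π3 L = (1/2) * ((∑ i, (L i - s)) ^ 2 +
              (2*π3/π1) * ∑ i, ∑ j ∈ Finset.univ.filter (· ≠ i),
                ((L i - s) - (L j - s)) ^ 2) := rfl
          rw [this] at h0
          linarith
        have hKY : (2*π3/π1) * ∑ i, ∑ j ∈ Finset.univ.filter (· ≠ i),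
            ((L i - s) - (L j - s)) ^ 2 = 0 := by
          have := mul_nonneg hKpos.le hY
          nlinarith
        have hYzero : ∑ i, ∑ j ∈ Finset.univ.filter (· ≠ i),
            ((L i - s) - (L j - s)) ^ 2 = 0 := by
          rcases mul_eq_zero.mp hKY with h | h
          · exact absurd h (ne_of_gt hKpos)
          · exact h
        have hXzero : (∑ i, (L i - s)) = 0 := by
          have h2 : (∑ i, (L i - s)) ^ 2 = 0 := by linarith
          exact pow_eq_zero_iff (by norm_num) |>.mp h2
        have hall : ∀ i j : Fin N, L i = L j := by
          intro i j
          by_cases hij : j = i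
          · rw [hij]
          · have h1 := (Finset.sum_eq_zero_iff_of_nonneg
              (fun i _ => Finset.sum_nonneg fun j _ => sq_nonneg _)).mp hYzero i
              (Finset.mem_univ i)
            have h2 := (Finset.sum_eq_zero_iff_of_nonneg
              (fun j _ => sq_nonneg _)).mp h1 j
              (by simp [Finset.mem_filter, hij])
            have := pow_eq_zero_iff (n := 2) (by norm_num) |>.mp h2
            linarith [this]
        intro i
        have hsumconst : (∑ j : Fin N, (L j - s)) = (N:ℝ) * (L i - s) := by
          rw [Finset.sum_congr rfl (fun j _ => by rw [hall j i])]
          simp [Finset.card_univ, mul_comm]; ring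
        rw [hsumconst] at hXzero
        rcases mul_eq_zero.mp hXzero with h | h
        · exact absurd h hN0
        · linarith
      · intro h
        have : phiN π0 π1 π2 π3 L = (1/2) * ((∑ i, (L i - s)) ^ 2 +
            (2*π3/π1) * ∑ i, ∑ j ∈ Finset.univ.filter (· ≠ i),
              ((L i - s) - (L j - s)) ^ 2) := rfl
        rw [this]
        simp [h]
  · -- Part (ii)
    intro L hL
    obtain ⟨hLpos, hLsum⟩ := hL
    set T : ℝ := ∑ j, L j with hT
    set P : ℝ := ∑ j, (L j)^2 with hP
    have hT0 : 0 ≤ T := Finset.sum_nonneg fun j _ => hLpos j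
    have hP0 : 0 ≤ P := Finset.sum_nonneg fun j _ => sq_nonneg _
    have hD : (0:ℝ) < 1 + π2 * T + π3 * P := by positivity
    set J : ℝ := 1 / (1 + π2 * T + π3 * P) with hJdef
    have hJ : JN π2 π3 L = J := rfl
    have hJmul : J * (1 + π2*T + π3*P) = 1 := by
      rw [hJdef]; field_simp
    have hJpos' : 0 < J := by rw [hJdef]; positivity
    have hQ2 : 0 ≤ (N:ℝ) * P - T^2 := by
      have := pair_sq L
      have hnn : (0:ℝ) ≤ ∑ j : Fin N, ∑ k : Fin N, (L j - L k)^2 :=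
        Finset.sum_nonneg fun j _ => Finset.sum_nonneg fun k _ => sq_nonneg _
      rw [← hT, ← hP] at this
      linarith
    -- each partial derivative
    have hderiv : ∀ i : Fin N,
        deriv (fun x => phiN π0 π1 π2 π3 (Function.update L i x)) (L i)
          = (T - (N:ℝ)*s) + (4*π3/π1) * ((N:ℝ) * L i - T) := by
      intro i
      rw [phiN_deriv π0 π1 π2 π3 L i]
      have e1 : (∑ j, (L j - s)) = T - (N:ℝ)*s := by
        rw [Finset.sum_sub_distrib, Finset.sum_const]
        simp [Finset.card_univ, mul_comm, hT]
      have e2 : (∑ k ∈ Finset.univ.filter (· ≠ i), (L i - L k)) = (N:ℝ) * L i - T := by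
        have : (∑ k ∈ Finset.univ.filter (· ≠ i), (L i - L k))
            = ∑ k : Fin N, (L i - L k) := by
          apply Finset.sum_subset (Finset.filter_subset _ _)
          intro x _ hx
          simp only [Finset.mem_filter, Finset.mem_univ, true_and, not_not] at hx
          rw [hx]
          ring
        rw [this, Finset.sum_sub_distrib, Finset.sum_const]
        simp [Finset.card_univ, mul_comm, hT]
      rw [e1, e2]
      ring
    have hccpos : 0 < ((N:ℝ) + π1 + (N:ℝ)*π0*π2) + π0*π3*(T + (N:ℝ)*s) := by
      have h1 : 0 ≤ π0*π3*(T + (N:ℝ)*s) := by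
        apply mul_nonneg (mul_nonneg hπ0.le hπ3.le)
        have := mul_nonneg hNpos.le hs0
        linarith
      have h2 : 0 < (N:ℝ)*π0*π2 := by positivity
      linarith
    have hfpos : 0 < π0*(T - (N:ℝ)*s) + 4 := by
      have h1 : π0*((N:ℝ)*s) ≤ π0*(1-π0) := mul_le_mul_of_nonneg_left hNs hπ0.le
      have h2 : π0*(1-π0) ≤ 1 := by nlinarith
      have h3 : π0*(T - (N:ℝ)*s) = π0*T - π0*((N:ℝ)*s) := by ring
      have h4 : 0 ≤ π0*T := mul_nonneg hπ0.le hT0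
      linarith
    -- expand phiNDot as a quadratic in the L i
    have hdot : phiNDot π0 π1 π2 π3 L
        = (N:ℝ) * (((T - (N:ℝ)*s) - (4*π3/π1)*T) * (J*(1-T) - π0))
          + (((4*π3/π1)*(N:ℝ) * (J*(1-T) - π0)
              - (T - (N:ℝ)*s)*π1*J
              + (4*π3/π1)*T*π1*J) * T)
          + (-((4*π3/π1)*(N:ℝ)*π1*J)) * P := by
      rw [phiNDot]
      have hterm : ∀ i : Fin N,
          deriv (fun x => phiN π0 π1 π2 π3 (Function.update L i x)) (L i) *
            FN π0 π1 π2 π3 i L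
          = (((T - (N:ℝ)*s) - (4*π3/π1)*T) * (J*(1-T) - π0))
            + (((4*π3/π1)*(N:ℝ) * (J*(1-T) - π0)
                - (T - (N:ℝ)*s)*π1*J
                + (4*π3/π1)*T*π1*J) * L i)
            + (-((4*π3/π1)*(N:ℝ)*π1*J)) * (L i)^2 := by
        intro i
        rw [hderiv i]
        have hF : FN π0 π1 π2 π3 i L
            = J*(1-T) - π0 - π1*J*L i := by
          rw [FN, hJ]
        rw [hF]
        ring
      rw [Finset.sum_congr rfl (fun i _ => hterm i)]
      rw [Finset.sum_add_distrib, Finset.sum_add_distrib, Finset.sum_const,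
        ← Finset.mul_sum, ← Finset.mul_sum]
      simp only [Finset.card_univ, Fintype.card_fin, nsmul_eq_mul, ← hT, ← hP]
    -- the key closed form
    have hkey : phiNDot π0 π1 π2 π3 L
        = J *
          (-((T - (N:ℝ)*s)^2 * (((N:ℝ) + π1 + (N:ℝ)*π0*π2) + π0*π3*(T + (N:ℝ)*s)))
            - π3 * ((N:ℝ)*P - T^2) * (π0*(T - (N:ℝ)*s) + 4)) := by
      rw [hdot]
      have hc : 4*π3/π1*π1 = 4*π3 := div_mul_cancel₀ _ hπ1.ne'
      linear_combination (J*T^2 - (N:ℝ)*J*P) * hc + ((T-(N:ℝ)*s)*(N:ℝ)*π0) * hJmul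
        - ((T-(N:ℝ)*s)*(N:ℝ)*J) * hsq
    clear hdot hderiv
    have hterm1 : 0 ≤ (T - (N:ℝ)*s)^2 * (((N:ℝ) + π1 + (N:ℝ)*π0*π2) + π0*π3*(T + (N:ℝ)*s)) :=
      mul_nonneg (sq_nonneg _) hccpos.le
    have hterm2 : 0 ≤ π3 * ((N:ℝ)*P - T^2) * (π0*(T - (N:ℝ)*s) + 4) :=
      mul_nonneg (mul_nonneg hπ3.le hQ2) hfpos.le

    constructor
    · rw [hkey]
      apply mul_nonpos_of_nonneg_of_nonpos hJpos'.le
      linarith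
    · intro h0
      rw [hkey] at h0
      have hinner : -((T - (N:ℝ)*s)^2 * (((N:ℝ) + π1 + (N:ℝ)*π0*π2) + π0*π3*(T + (N:ℝ)*s)))
          - π3 * ((N:ℝ)*P - T^2) * (π0*(T - (N:ℝ)*s) + 4) = 0 := by
        rcases mul_eq_zero.mp h0 with h | h
        · exact absurd h (ne_of_gt hJpos')
        · exact h
      have hS : T - (N:ℝ)*s = 0 := by
        have h1 : (T - (N:ℝ)*s)^2 * (((N:ℝ) + π1 + (N:ℝ)*π0*π2) + π0*π3*(T + (N:ℝ)*s)) = 0 := by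
          linarith
        rcases mul_eq_zero.mp h1 with h | h
        · exact pow_eq_zero_iff (by norm_num) |>.mp h
        · exact absurd h (ne_of_gt hccpos)
      have hQ2zero : (N:ℝ)*P - T^2 = 0 := by
        have h1 : π3 * ((N:ℝ)*P - T^2) * (π0*(T - (N:ℝ)*s) + 4) = 0 := by linarith
        rcases mul_eq_zero.mp h1 with h | h
        · rcases mul_eq_zero.mp h with h' | h'
          · exact absurd h' (ne_of_gt hπ3)
          · exact h'
        · exact absurd h (ne_of_gt hfpos)
      -- all components are equal
      have hall : ∀ i j : Fin N, L i = L j := by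
        have hsum0 : ∑ j : Fin N, ∑ k : Fin N, (L j - L k)^2 = 0 := by
          have := pair_sq L
          rw [← hT, ← hP] at this
          rw [this]
          linarith
        intro i j
        have h1 := (Finset.sum_eq_zero_iff_of_nonneg
          (fun j _ => Finset.sum_nonneg fun k _ => sq_nonneg _)).mp hsum0 i (Finset.mem_univ i)
        have h2 := (Finset.sum_eq_zero_iff_of_nonneg
          (fun k _ => sq_nonneg _)).mp h1 j (Finset.mem_univ j)
        have := pow_eq_zero_iff (n := 2) (by norm_num) |>.mp h2
        linarith [this]
      intro i
      have hsumconst : T = (N:ℝ) * L i := by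
        rw [hT, Finset.sum_congr rfl (fun j _ => hall j i)]
        simp [Finset.card_univ, mul_comm]
      rw [hsumconst] at hS
      have : (N:ℝ) * (L i - s) = 0 := by linarith
      rcases mul_eq_zero.mp this with h | h
      · exact absurd h hN0
      · linarith
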